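/- Fix r_h ∈ ℝ, ω_0 > 0, m > 0, c_h > 0 and let a, b, c, w : ℝ → ℝ. Assume that for all r in some right-neighbourhood of r_h: a(r) ≠ 0, b(r)² − a(r) c(r) > 0, and ω_0² + w(r)² a(r) ≥ m; and assume that as r → r_h from the right: b(r)² − a(r) c(r) → 0, c(r) → c_h, and b and w are bounded. Define R_±(r) = ±(b(r)/a(r)) ω_0 + (1/a(r)) √(b(r)² − a(r) c(r)) √(ω_0² + w(r)² a(r)). Then R_±(r) ≠ 0 for all r sufficiently close to r_h from the right, and 1/R_±(r) ∓ b(r)/(c(r) ω_0) → 0 as r → r_h from the right (for both choices of sign). -/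

import Mathlib

open Real Filter Topology

lemma stmt8_bdd_mul {l : Filter ℝ} {u v : ℝ → ℝ} {M : ℝ}
    (hv : ∀ᶠ r in l, |v r| ≤ M) (hu : Tendsto u l (𝓝 0)) :
    Tendsto (fun r => v r * u r) l (𝓝 0) := by
  refine squeeze_zero_norm' (a := fun r => M * |u r|) ?_ ?_
  · filter_upwards [hv] with r h
    rw [Real.norm_eq_abs, abs_mul]
    exact mul_le_mul_of_nonneg_right h (abs_nonneg _)
  · have h2 : Tendsto (fun r => |u r|) l (𝓝 0) := by simpa using hu.abs
    simpa using h2.const_mul M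

lemma stmt8_key (a b c w ω0 D S Q R : ℝ) (ha : a ≠ 0) (hDe : D = b^2 - a*c)
    (hQe : Q^2 = ω0^2 + w^2*a) (hSe : S^2 = D)
    (hE : c*ω0^2 - w^2*D ≠ 0) (hc : c ≠ 0) (hω : ω0 ≠ 0)
    (hR : R = (b*ω0 + S*Q)/a) :
    R ≠ 0 ∧ 1/R - b/(c*ω0) = (b*w^2*D - S*Q*(c*ω0)) / ((c*ω0^2 - w^2*D)*(c*ω0)) := by
  have hid : a*(c*ω0^2 - w^2*D) = (b*ω0+S*Q)*(b*ω0-S*Q) := by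
    have h1 : (b*ω0+S*Q)*(b*ω0-S*Q) = b^2*ω0^2 - S^2*Q^2 := by ring
    rw [h1, hSe, hQe, hDe]; ring
  have hX : b*ω0 + S*Q ≠ 0 := by
    intro h
    rcases mul_eq_zero.mp (show a*(c*ω0^2 - w^2*D) = 0 by rw [hid, h, zero_mul]) with h'|h'
    · exact ha h'
    · exact hE h'
  have hRne : R ≠ 0 := hR ▸ div_ne_zero hX ha
  refine ⟨hRne, ?_⟩
  have h1R : 1/R = (b*ω0 - S*Q)/(c*ω0^2 - w^2*D) := by
    rw [hR, one_div_div, div_eq_div_iff hX hE]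
    linear_combination hid
  rw [h1R]
  rw [div_sub_div _ _ hE (mul_ne_zero hc hω)]
  congr 1; ring

set_option maxHeartbeats 1000000 in
/-- Near a horizon (`b² − a c → 0`, `c → c_h > 0`), the potentials `R_±` are eventually
nonzero and `1/R_± ∓ b/(c ω₀) → 0` as `r → r_h⁺`. -/
theorem stmt8 (r_h ω0 m c_h : ℝ) (hω0 : 0 < ω0) (hm : 0 < m) (hch : 0 < c_h)
    (a b c w : ℝ → ℝ)
    (hcond : ∀ᶠ r in 𝓝[>] r_h,
      a r ≠ 0 ∧ 0 < b r ^ 2 - a r * c r ∧ m ≤ ω0 ^ 2 + w r ^ 2 * a r)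
    (hdet : Tendsto (fun r => b r ^ 2 - a r * c r) (𝓝[>] r_h) (𝓝 0))
    (hc : Tendsto c (𝓝[>] r_h) (𝓝 c_h))
    (hb : ∃ M : ℝ, ∀ᶠ r in 𝓝[>] r_h, |b r| ≤ M)
    (hw : ∃ M : ℝ, ∀ᶠ r in 𝓝[>] r_h, |w r| ≤ M)
    (Rp Rm : ℝ → ℝ)
    (hRp : ∀ r, Rp r = (b r / a r) * ω0 +
      (1 / a r) * Real.sqrt (b r ^ 2 - a r * c r) * Real.sqrt (ω0 ^ 2 + w r ^ 2 * a r))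
    (hRm : ∀ r, Rm r = -(b r / a r) * ω0 +
      (1 / a r) * Real.sqrt (b r ^ 2 - a r * c r) * Real.sqrt (ω0 ^ 2 + w r ^ 2 * a r)) :
    (∀ᶠ r in 𝓝[>] r_h, Rp r ≠ 0 ∧ Rm r ≠ 0) ∧
    Tendsto (fun r => 1 / Rp r - b r / (c r * ω0)) (𝓝[>] r_h) (𝓝 0) ∧
    Tendsto (fun r => 1 / Rm r + b r / (c r * ω0)) (𝓝[>] r_h) (𝓝 0) := by
  obtain ⟨Mb0, hbM0⟩ := hb
  obtain ⟨Mw0, hwM0⟩ := hw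
  set Mb : ℝ := |Mb0| with hMb
  set Mw : ℝ := |Mw0| with hMw
  have hbM : ∀ᶠ r in 𝓝[>] r_h, |b r| ≤ Mb := by
    filter_upwards [hbM0] with r h; exact h.trans (le_abs_self _)
  have hwM : ∀ᶠ r in 𝓝[>] r_h, |w r| ≤ Mw := by
    filter_upwards [hwM0] with r h; exact h.trans (le_abs_self _)
  have hMb0 : 0 ≤ Mb := abs_nonneg _
  have hMw0 : 0 ≤ Mw := abs_nonneg _
  -- notation
  set l : Filter ℝ := 𝓝[>] r_h with hl
  set D : ℝ → ℝ := fun r => b r ^ 2 - a r * c r with hD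
  set S : ℝ → ℝ := fun r => Real.sqrt (D r) with hS
  set Q : ℝ → ℝ := fun r => Real.sqrt (ω0 ^ 2 + w r ^ 2 * a r) with hQ
  set E : ℝ → ℝ := fun r => c r * ω0^2 - w r ^ 2 * D r with hE
  -- basic eventual facts
  have hc2 : ∀ᶠ r in l, c_h/2 < c r := hc.eventually (eventually_gt_nhds (by linarith))
  have hD1 : ∀ᶠ r in l, D r < 1 := hdet.eventually (eventually_lt_nhds one_pos)
  -- bound on a
  set Ma : ℝ := (Mb^2 + 1) * 2 / c_h with hMa
  have hMa0 : 0 ≤ Ma := by positivity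
  have haM : ∀ᶠ r in l, |a r| ≤ Ma := by
    filter_upwards [hcond, hc2, hD1, hbM] with r ⟨har, hDr, _⟩ hcr hD1r hbr
    have hc0 : 0 < c r := by linarith
    have hb2 : b r ^ 2 ≤ Mb ^ 2 := by nlinarith [abs_nonneg (b r), sq_abs (b r)]
    have hD1r' : b r ^ 2 - a r * c r < 1 := hD1r
    have hac : |a r * c r| ≤ Mb^2 + 1 := by
      rw [abs_le]; constructor <;> nlinarith
    have hac2 : |a r| * c r ≤ Mb^2 + 1 := by
      rwa [abs_mul, abs_of_pos hc0] at hac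
    rw [hMa, le_div_iff₀ hch]
    nlinarith [abs_nonneg (a r)]
  -- bound on Q
  set MQ : ℝ := Real.sqrt (ω0^2 + Mw^2 * Ma) with hMQ
  have hQM : ∀ᶠ r in l, |Q r| ≤ MQ := by
    filter_upwards [hwM, haM] with r hwr har
    rw [abs_of_nonneg (Real.sqrt_nonneg _)]
    apply Real.sqrt_le_sqrt
    have h1 : w r ^ 2 ≤ Mw ^ 2 := by nlinarith [abs_nonneg (w r), sq_abs (w r)]
    have h2 : a r ≤ Ma := (le_abs_self _).trans har
    nlinarith [sq_nonneg (w r), neg_abs_le (a r)]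
  -- S → 0
  have hS0 : Tendsto S l (𝓝 0) := by
    have := hdet.sqrt
    simpa [hS, hD] using this
  -- S*Q → 0
  have hSQ0 : Tendsto (fun r => S r * Q r) l (𝓝 0) := by
    have := stmt8_bdd_mul hQM hS0
    simpa [mul_comm] using this
  -- E → c_h * ω0^2
  have hw2M : ∀ᶠ r in l, |w r ^ 2| ≤ Mw ^ 2 := by
    filter_upwards [hwM] with r hwr
    rw [abs_of_nonneg (sq_nonneg _)]
    nlinarith [abs_nonneg (w r), sq_abs (w r)]
  have hwD0 : Tendsto (fun r => w r ^ 2 * D r) l (𝓝 0) := stmt8_bdd_mul hw2M hdet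
  have hEt : Tendsto E l (𝓝 (c_h * ω0^2)) := by
    have := (hc.mul_const (ω0^2)).sub hwD0
    simpa [hE] using this
  have hEpos : ∀ᶠ r in l, 0 < E r := hEt.eventually (eventually_gt_nhds (by positivity))
  -- denominator limit
  have hdt : Tendsto (fun r => E r * (c r * ω0)) l (𝓝 ((c_h * ω0^2) * (c_h * ω0))) :=
    hEt.mul (hc.mul_const ω0)
  have hdne : (c_h * ω0^2) * (c_h * ω0) ≠ 0 := by positivity
  -- numerator limits
  have hbw2 : ∀ᶠ r in l, |b r * w r ^ 2| ≤ Mb * Mw ^ 2 := by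
    filter_upwards [hbM, hwM] with r hbr hwr
    rw [abs_mul, abs_of_nonneg (sq_nonneg (w r))]
    have h1 : w r ^ 2 ≤ Mw ^ 2 := by nlinarith [abs_nonneg (w r), sq_abs (w r)]
    calc |b r| * w r ^ 2 ≤ Mb * w r ^ 2 := mul_le_mul_of_nonneg_right hbr (sq_nonneg _)
      _ ≤ Mb * Mw ^ 2 := mul_le_mul_of_nonneg_left h1 hMb0
  have hnbw2 : ∀ᶠ r in l, |(-(b r)) * w r ^ 2| ≤ Mb * Mw ^ 2 := by
    filter_upwards [hbw2] with r h
    simpa [abs_mul] using h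
  have hSQc0 : Tendsto (fun r => S r * Q r * (c r * ω0)) l (𝓝 0) := by
    have := hSQ0.mul (hc.mul_const ω0)
    simpa using this
  have hpnum : Tendsto (fun r => b r * w r ^ 2 * D r - S r * Q r * (c r * ω0)) l (𝓝 0) := by
    have h1 := stmt8_bdd_mul hbw2 hdet
    have := h1.sub hSQc0
    simpa [mul_assoc] using this
  have hmnum : Tendsto (fun r => (-(b r)) * w r ^ 2 * D r - S r * Q r * (c r * ω0)) l (𝓝 0) := by
    have h1 := stmt8_bdd_mul hnbw2 hdet
    have := h1.sub hSQc0
    simpa [mul_assoc] using this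
  -- quotient limits
  have hpq : Tendsto (fun r => (b r * w r ^ 2 * D r - S r * Q r * (c r * ω0)) /
      (E r * (c r * ω0))) l (𝓝 0) := by
    have := hpnum.div hdt hdne
    rw [zero_div] at this; exact this
  have hmq : Tendsto (fun r => ((-(b r)) * w r ^ 2 * D r - S r * Q r * (c r * ω0)) /
      (E r * (c r * ω0))) l (𝓝 0) := by
    have := hmnum.div hdt hdne
    rw [zero_div] at this; exact this
  -- eventual identities via the key lemma
  have hmain : ∀ᶠ r in l, (Rp r ≠ 0 ∧ Rm r ≠ 0) ∧
      (1 / Rp r - b r / (c r * ω0) =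
        (b r * w r ^ 2 * D r - S r * Q r * (c r * ω0)) / (E r * (c r * ω0))) ∧
      (1 / Rm r + b r / (c r * ω0) =
        ((-(b r)) * w r ^ 2 * D r - S r * Q r * (c r * ω0)) / (E r * (c r * ω0))) := by
    filter_upwards [hcond, hc2, hEpos] with r ⟨har, hDr, hQr⟩ hcr hEr
    have hc0 : (0:ℝ) < c r := by linarith
    have hQe : Q r ^ 2 = ω0 ^ 2 + w r ^ 2 * a r :=
      Real.sq_sqrt (le_trans hm.le hQr)
    have hSe : S r ^ 2 = D r := Real.sq_sqrt hDr.le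
    have hEne : c r * ω0^2 - w r ^ 2 * D r ≠ 0 := by
      have : E r = c r * ω0^2 - w r ^ 2 * D r := rfl
      linarith [hEr]
    have hRpe : Rp r = (b r * ω0 + S r * Q r) / a r := by
      rw [hRp r]; simp only [hS, hQ, hD]; field_simp; try ring
    have hRme : Rm r = ((-(b r)) * ω0 + S r * Q r) / a r := by
      rw [hRm r]; simp only [hS, hQ, hD]; field_simp; try ring
    have kp := stmt8_key (a r) (b r) (c r) (w r) ω0 (D r) (S r) (Q r) (Rp r)
      har rfl hQe hSe hEne hc0.ne' hω0.ne' hRpe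
    have km := stmt8_key (a r) (-(b r)) (c r) (w r) ω0 (D r) (S r) (Q r) (Rm r)
      har (show D r = (-(b r))^2 - a r * c r by show b r ^ 2 - a r * c r = _; ring) hQe hSe hEne hc0.ne' hω0.ne' hRme
    refine ⟨⟨kp.1, km.1⟩, kp.2, ?_⟩
    have := km.2
    rw [show -(b r) / (c r * ω0) = -(b r / (c r * ω0)) by ring, sub_neg_eq_add] at this
    exact this
  refine ⟨?_, ?_, ?_⟩
  · filter_upwards [hmain] with r h; exact h.1
  · refine hpq.congr' ?_
    filter_upwards [hmain] with r h
    exact h.2.1.symm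
  · refine hmq.congr' ?_
    filter_upwards [hmain] with r h
    exact h.2.2.symm
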